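/- Let k and r be real numbers with 1 < r < k, set δ := k² + r − √((k²−1)(k²−r²)) and t := (r−1)(r+1+δ)/((r+3)δ − (r+1)(3r+1)), let l₁ := 2·log k, and let l₂ ≥ 0 be the real number with cosh(l₂/2) = (k − r/k)/(r−1). Then (t−1)/(t+1) = (2r(r+1) − 2δ)/(δ(r+1) − (r+1)²) and (t−1)/(t+1) = sinh(l₂/2) / (cosh(l₁/2) + cosh(l₂/2)). -/

import Mathlib

set_option maxHeartbeats 1000000 in
/-- Theorems 1.1 and 3.1, algebraic content for θ₂:
with `δ = k² + r - √((k²-1)(k²-r²))`, `t = (r-1)(r+1+δ)/((r+3)δ - (r+1)(3r+1))`,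
`l₁ = 2 log k` and `cosh (l₂/2) = (k - r/k)/(r-1)`, one has
`(t-1)/(t+1) = (2r(r+1) - 2δ)/(δ(r+1) - (r+1)²)` and
`(t-1)/(t+1) = sinh(l₂/2) / (cosh(l₁/2) + cosh(l₂/2))`. -/
theorem stmt1 (k r l₂ : ℝ) (hr : 1 < r) (hk : r < k) (hl₂ : 0 ≤ l₂)
    (hcosh : Real.cosh (l₂ / 2) = (k - r / k) / (r - 1)) :
    let δ := k ^ 2 + r - Real.sqrt ((k ^ 2 - 1) * (k ^ 2 - r ^ 2))
    let t := (r - 1) * (r + 1 + δ) / ((r + 3) * δ - (r + 1) * (3 * r + 1))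
    (t - 1) / (t + 1) = (2 * r * (r + 1) - 2 * δ) / (δ * (r + 1) - (r + 1) ^ 2) ∧
    (t - 1) / (t + 1) =
      Real.sinh (l₂ / 2) /
        (Real.cosh ((2 * Real.log k) / 2) + Real.cosh (l₂ / 2)) := by
  intro δ t
  set s : ℝ := Real.sqrt ((k ^ 2 - 1) * (k ^ 2 - r ^ 2)) with hs_def
  have hδ : δ = k ^ 2 + r - s := rfl
  have ht : t = (r - 1) * (r + 1 + δ) / ((r + 3) * δ - (r + 1) * (3 * r + 1)) := rfl
  clear_value δ t
  have hk1 : (1:ℝ) < k := lt_trans hr hk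
  have hk0 : (0:ℝ) < k := by linarith
  have h1 : (0:ℝ) < k ^ 2 - 1 := by nlinarith
  have h2 : (0:ℝ) < k ^ 2 - r ^ 2 := by nlinarith
  have hs0 : 0 ≤ s := Real.sqrt_nonneg _
  have hs2 : s ^ 2 = (k ^ 2 - 1) * (k ^ 2 - r ^ 2) := Real.sq_sqrt (by positivity)
  -- s < k² - r
  have hslt : s < k ^ 2 - r := by
    rw [hs_def]
    exact (Real.sqrt_lt' (by nlinarith)).mpr (by nlinarith [mul_pos (pow_pos hk0 2) (pow_pos (show (0:ℝ) < r - 1 by linarith) 2)])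
  have hδ2r : 2 * r < δ := by rw [hδ]; linarith
  -- M := k²(r+3) - (2r²+r+1) > 0 and (r+3) s < M
  have hM : 0 < k ^ 2 * (r + 3) - (2 * r ^ 2 + r + 1) := by nlinarith
  have hfac : (0:ℝ) < (r - 1) ^ 2 * (r + 1) * ((3 * r + 1) + k ^ 2 * (r + 3)) :=
    mul_pos (mul_pos (pow_pos (by linarith) 2) (by linarith)) (by nlinarith)
  have hsM : (r + 3) * s < k ^ 2 * (r + 3) - (2 * r ^ 2 + r + 1) := by
    nlinarith [hs2, hs0, hM, hfac]
  have hD : 0 < (r + 3) * δ - (r + 1) * (3 * r + 1) := by rw [hδ]; nlinarith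
  have hDne : (r + 3) * δ - (r + 1) * (3 * r + 1) ≠ 0 := ne_of_gt hD
  have hB : 0 < δ * (r + 1) - (r + 1) ^ 2 := by nlinarith
  -- first equality
  have h1' : t - 1 = (4 * (r * (r + 1) - δ)) / ((r + 3) * δ - (r + 1) * (3 * r + 1)) := by
    rw [ht, div_sub_one hDne]; congr 1; ring
  have h2' : t + 1 = (2 * (δ * (r + 1) - (r + 1) ^ 2)) / ((r + 3) * δ - (r + 1) * (3 * r + 1)) := by
    rw [ht, div_add_one hDne]; congr 1; ring
  have key : (t - 1) / (t + 1) = (2 * r * (r + 1) - 2 * δ) / (δ * (r + 1) - (r + 1) ^ 2) := by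
    rw [h1', h2', div_div_div_cancel_right₀ hDne]
    rw [show (4 * (r * (r + 1) - δ)) = 2 * (2 * r * (r + 1) - 2 * δ) by ring,
      show (2 * (δ * (r + 1) - (r + 1) ^ 2)) = 2 * (δ * (r + 1) - (r + 1) ^ 2) from rfl,
      mul_div_mul_left _ _ (two_ne_zero)]
  refine ⟨key, ?_⟩
  rw [key]
  -- compute cosh(log k) and sinh(l₂/2)
  have hlog : (2 * Real.log k) / 2 = Real.log k := by ring
  rw [hlog, Real.cosh_log hk0]
  have hr1 : (0:ℝ) < r - 1 := by linarith
  have hsinh : Real.sinh (l₂ / 2) = s / (k * (r - 1)) := by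
    have hnn : 0 ≤ Real.sinh (l₂ / 2) := Real.sinh_nonneg_iff.mpr (by linarith)
    have hnn2 : 0 ≤ s / (k * (r - 1)) := by positivity
    have hsq : (Real.sinh (l₂ / 2)) ^ 2 = (s / (k * (r - 1))) ^ 2 := by
      rw [Real.sinh_sq, hcosh]
      field_simp
      linear_combination -hs2
    calc Real.sinh (l₂ / 2) = Real.sqrt ((Real.sinh (l₂ / 2)) ^ 2) :=
          (Real.sqrt_sq hnn).symm
      _ = Real.sqrt ((s / (k * (r - 1))) ^ 2) := by rw [hsq]
      _ = s / (k * (r - 1)) := Real.sqrt_sq hnn2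
  rw [hsinh, hcosh]
  have hden : 0 < (k + k⁻¹) / 2 + (k - r / k) / (r - 1) := by
    have : 0 < (k + k⁻¹) / 2 := by positivity
    have h3 : 0 < (k - r / k) / (r - 1) := by
      apply div_pos _ hr1
      rw [sub_pos, div_lt_iff₀ hk0]
      nlinarith
    linarith
  rw [div_eq_div_iff (ne_of_gt hB) (ne_of_gt hden)]
  rw [hδ]
  field_simp
  ring_nf
  linear_combination (r + 1) * hs2
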